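/- arXiv:quant-ph/0611013 — 2 statements merged into one kernel-verified Lean document; each statement's English description precedes it below -/
import Mathlib

section
/- The function φ(s) = log Tr[ρ^{1−s}σ^s] is convex in s on [0,1] for any two positive definite density matrices ρ and σ. -/
open Matrix
open scoped ComplexOrder
set_option linter.unusedSectionVars false

variable {d : Type*} [Fintype d] [DecidableEq d]

/-- Real part of the trace of a complex matrix. -/
noncomputable def RTr (M : Matrix d d ℂ) : ℝ := (Matrix.trace M).re

/-- Functional calculus outputs are Hermitian for real functions. -/
lemma cfc_isHermitian {A : Matrix d d ℂ} (hA : A.IsHermitian) (f : ℝ → ℝ) :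
    (hA.cfc f).IsHermitian := by
  have hd : (Matrix.diagonal (RCLike.ofReal ∘ f ∘ hA.eigenvalues) :
      Matrix d d ℂ).IsHermitian := by
    refine Matrix.isHermitian_diagonal_of_self_adjoint _ ?_
    ext i
    simp [Function.comp, RCLike.star_def, Complex.conj_ofReal]
  simpa [Matrix.IsHermitian.cfc, mul_assoc, Matrix.star_eq_conjTranspose] using
    Matrix.isHermitian_mul_mul_conjTranspose
      (hA.eigenvectorUnitary : Matrix d d ℂ) hd

/-- Matrix power via functional calculus, with the convention `0 ^ t = 0`. -/
noncomputable def mpow {A : Matrix d d ℂ} (hA : A.IsHermitian) (t : ℝ) : Matrix d d ℂ :=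
  hA.cfc fun x => if x = 0 then 0 else x ^ t

lemma mpow_isHermitian {A : Matrix d d ℂ} (hA : A.IsHermitian) (t : ℝ) :
    (mpow hA t).IsHermitian := cfc_isHermitian hA _

/-- Spectral projection `{C ≥ 0}` onto the nonnegative eigenspaces of a Hermitian matrix. -/
noncomputable def projNonneg {C : Matrix d d ℂ} (hC : C.IsHermitian) : Matrix d d ℂ :=
  hC.cfc fun x => if 0 ≤ x then 1 else 0

/-- Spectral projection `{C < 0}` onto the negative eigenspaces of a Hermitian matrix. -/
noncomputable def projNeg {C : Matrix d d ℂ} (hC : C.IsHermitian) : Matrix d d ℂ :=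
  hC.cfc fun x => if x < 0 then 1 else 0

/-- `n`-fold tensor (Kronecker) power of a matrix. -/
noncomputable def tpow (ρ : Matrix d d ℂ) (n : ℕ) : Matrix (Fin n → d) (Fin n → d) ℂ :=
  Matrix.of fun v w => ∏ i, ρ (v i) (w i)

lemma tpow_isHermitian {ρ : Matrix d d ℂ} (h : ρ.IsHermitian) (n : ℕ) :
    (tpow ρ n).IsHermitian := by
  refine Matrix.IsHermitian.ext fun v w => ?_
  simp only [tpow, Matrix.of_apply, star_prod]
  exact Finset.prod_congr rfl fun i _ => h.apply (v i) (w i)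

lemma smul_isHermitian {A : Matrix d d ℂ} (h : A.IsHermitian) (c : ℝ) :
    ((c : ℂ) • A).IsHermitian := by
  refine Matrix.IsHermitian.ext fun i j => ?_
  simp [Complex.conj_ofReal, h.apply i j, mul_comm]

/-- `phi s = log Tr[rho^(1-s) sigma^s]`. -/
noncomputable def phi {ρ σ : Matrix d d ℂ} (hρ : ρ.IsHermitian) (hσ : σ.IsHermitian) (s : ℝ) : ℝ :=
  Real.log (RTr (mpow hρ (1 - s) * mpow hσ s))



lemma logsumexp_convexOn {ι : Type*} [Fintype ι] (w c t : ι → ℝ)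
    (hw : ∀ i, 0 ≤ w i) (hpos : ∃ i, 0 < w i) :
    ConvexOn ℝ Set.univ (fun s => Real.log (∑ i, w i * Real.exp (c i + s * t i))) := by
  set F : ℝ → ℝ := fun s => ∑ i, w i * Real.exp (c i + s * t i) with hF
  have hFpos : ∀ s, 0 < F s := by
    intro s
    obtain ⟨i₀, hi₀⟩ := hpos
    exact Finset.sum_pos' (fun i _ => mul_nonneg (hw i) (Real.exp_pos _).le)
      ⟨i₀, Finset.mem_univ _, mul_pos hi₀ (Real.exp_pos _)⟩
  refine ⟨convex_univ, ?_⟩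
  intro s₁ _ s₂ _ lam mu hlam hmu hs
  simp only [smul_eq_mul]
  rcases eq_or_lt_of_le hlam with h0 | hlam'
  · have hmu1 : mu = 1 := by linarith
    simp [← h0, hmu1]
  rcases eq_or_lt_of_le hmu with h0 | hmu'
  · have hlam1 : lam = 1 := by linarith
    simp [← h0, hlam1]
  -- main case
  set A := F s₁
  set B := F s₂
  have hA : 0 < A := hFpos s₁
  have hB : 0 < B := hFpos s₂
  have key : F (lam * s₁ + mu * s₂) ≤ A ^ lam * B ^ mu := by
    have hterm : ∀ i, w i * Real.exp (c i + (lam * s₁ + mu * s₂) * t i) ≤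
        A ^ lam * B ^ mu * (lam * ((w i * Real.exp (c i + s₁ * t i)) / A) +
          mu * ((w i * Real.exp (c i + s₂ * t i)) / B)) := by
      intro i
      set u := w i * Real.exp (c i + s₁ * t i) with hu
      set v := w i * Real.exp (c i + s₂ * t i) with hv
      have hu0 : 0 ≤ u := mul_nonneg (hw i) (Real.exp_pos _).le
      have hv0 : 0 ≤ v := mul_nonneg (hw i) (Real.exp_pos _).le
      have hiden : w i * Real.exp (c i + (lam * s₁ + mu * s₂) * t i) = u ^ lam * v ^ mu := by
        rcases eq_or_lt_of_le (hw i) with hwi | hwi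
        · rw [hu, hv, ← hwi]
          simp [Real.zero_rpow (ne_of_gt hlam'), Real.zero_rpow (ne_of_gt hmu')]
        · rw [hu, hv, Real.mul_rpow (le_of_lt hwi) (Real.exp_pos _).le,
            Real.mul_rpow (le_of_lt hwi) (Real.exp_pos _).le,
            Real.rpow_def_of_pos (Real.exp_pos _), Real.rpow_def_of_pos (Real.exp_pos _),
            Real.log_exp, Real.log_exp]
          rw [show w i ^ lam * Real.exp ((c i + s₁ * t i) * lam) *
              (w i ^ mu * Real.exp ((c i + s₂ * t i) * mu)) =
              (w i ^ lam * w i ^ mu) * (Real.exp ((c i + s₁ * t i) * lam) *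
                Real.exp ((c i + s₂ * t i) * mu)) by ring,
            ← Real.rpow_add hwi, hs, Real.rpow_one, ← Real.exp_add]
          have harg : c i + (lam * s₁ + mu * s₂) * t i =
              (c i + s₁ * t i) * lam + (c i + s₂ * t i) * mu := by
            linear_combination (-(c i)) * hs
          rw [harg]
      rw [hiden]
      have hgm := Real.geom_mean_le_arith_mean2_weighted hlam hmu
        (div_nonneg hu0 hA.le) (div_nonneg hv0 hB.le) hs
      have heq : (u / A) ^ lam * (v / B) ^ mu = u ^ lam * v ^ mu / (A ^ lam * B ^ mu) := by
        rw [Real.div_rpow hu0 hA.le, Real.div_rpow hv0 hB.le]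
        ring
      rw [heq] at hgm
      have hABpos : 0 < A ^ lam * B ^ mu :=
        mul_pos (Real.rpow_pos_of_pos hA _) (Real.rpow_pos_of_pos hB _)
      calc u ^ lam * v ^ mu = A ^ lam * B ^ mu * (u ^ lam * v ^ mu / (A ^ lam * B ^ mu)) := by
            field_simp
        _ ≤ A ^ lam * B ^ mu * (lam * (u / A) + mu * (v / B)) := by
            exact mul_le_mul_of_nonneg_left hgm hABpos.le
    calc F (lam * s₁ + mu * s₂) ≤ ∑ i, A ^ lam * B ^ mu *
          (lam * ((w i * Real.exp (c i + s₁ * t i)) / A) +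
            mu * ((w i * Real.exp (c i + s₂ * t i)) / B)) :=
          Finset.sum_le_sum fun i _ => hterm i
      _ = A ^ lam * B ^ mu := by
          rw [← Finset.mul_sum]
          have : ∑ i, (lam * ((w i * Real.exp (c i + s₁ * t i)) / A) +
              mu * ((w i * Real.exp (c i + s₂ * t i)) / B)) = lam * (A / A) + mu * (B / B) := by
            rw [Finset.sum_add_distrib]
            simp only [div_eq_mul_inv, ← Finset.mul_sum, ← Finset.sum_mul]
            rfl
          rw [this, div_self hA.ne', div_self hB.ne']
          linear_combination (A ^ lam * B ^ mu) * hs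
  calc Real.log (F (lam * s₁ + mu * s₂)) ≤ Real.log (A ^ lam * B ^ mu) :=
        Real.log_le_log (hFpos _) key
    _ = lam * Real.log A + mu * Real.log B := by
        rw [Real.log_mul (Real.rpow_pos_of_pos hA _).ne' (Real.rpow_pos_of_pos hB _).ne',
          Real.log_rpow hA, Real.log_rpow hB]

lemma mpow_posdef_eq {A : Matrix d d ℂ} (hA : A.PosDef) (t : ℝ) :
    mpow hA.1 t = (hA.1.eigenvectorUnitary : Matrix d d ℂ) *
      Matrix.diagonal (fun i => ((hA.1.eigenvalues i ^ t : ℝ) : ℂ)) *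
      star (hA.1.eigenvectorUnitary : Matrix d d ℂ) := by
  unfold mpow
  have hfun : (RCLike.ofReal ∘ (fun x => if x = 0 then 0 else x ^ t) ∘ hA.1.eigenvalues :
      d → ℂ) = fun i => ((hA.1.eigenvalues i ^ t : ℝ) : ℂ) := by
    funext i
    simp [Function.comp, if_neg (hA.eigenvalues_pos i).ne']
  rw [Matrix.IsHermitian.cfc, hfun]
  exact Unitary.conjStarAlgAut_apply _ _

lemma RTr_mpow_mul {ρ σ : Matrix d d ℂ} (hρ : ρ.PosDef) (hσ : σ.PosDef) (r s : ℝ) :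
    RTr (mpow hρ.1 r * mpow hσ.1 s) = ∑ i, ∑ j,
      Complex.normSq ((star (hρ.1.eigenvectorUnitary : Matrix d d ℂ) *
        (hσ.1.eigenvectorUnitary : Matrix d d ℂ)) i j) *
        (hρ.1.eigenvalues i ^ r * hσ.1.eigenvalues j ^ s) := by
  set U : Matrix d d ℂ := (hρ.1.eigenvectorUnitary : Matrix d d ℂ) with hU
  set V : Matrix d d ℂ := (hσ.1.eigenvectorUnitary : Matrix d d ℂ) with hV
  set a : d → ℝ := hρ.1.eigenvalues
  set b : d → ℝ := hσ.1.eigenvalues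
  set D₁ : Matrix d d ℂ := Matrix.diagonal (fun i => ((a i ^ r : ℝ) : ℂ))
  set D₂ : Matrix d d ℂ := Matrix.diagonal (fun j => ((b j ^ s : ℝ) : ℂ))
  set P : Matrix d d ℂ := star U * V with hP
  rw [mpow_posdef_eq hρ r, mpow_posdef_eq hσ s]
  have htr : Matrix.trace (U * D₁ * star U * (V * D₂ * star V)) =
      Matrix.trace (D₁ * P * D₂ * star P) := by
    have h1 : U * D₁ * star U * (V * D₂ * star V) = U * (D₁ * P * D₂ * star V) := by
      rw [hP]
      simp only [mul_assoc]
    have h2 : D₁ * P * D₂ * star V * U = D₁ * P * D₂ * star P := by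
      rw [hP, StarMul.star_mul, star_star, mul_assoc]
    rw [h1, Matrix.trace_mul_comm, h2]
  rw [RTr, htr]
  rw [Matrix.trace]
  rw [Complex.re_sum]
  congr 1
  funext i
  rw [Matrix.diag_apply]
  rw [show D₁ * P * D₂ * star P = D₁ * (P * D₂ * star P) by simp only [mul_assoc]]
  rw [Matrix.diagonal_mul]
  have hMi : (P * D₂ * star P) i i = ∑ j, (((b j ^ s) * Complex.normSq (P i j) : ℝ) : ℂ) := by
    rw [Matrix.mul_apply]
    refine Finset.sum_congr rfl fun j _ => ?_
    rw [Matrix.mul_diagonal, Matrix.star_apply]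
    rw [mul_right_comm]
    rw [show star (P i j) = (starRingEnd ℂ) (P i j) from rfl, Complex.mul_conj]
    push_cast
    ring
  rw [hMi, Finset.mul_sum, Complex.re_sum]
  refine Finset.sum_congr rfl fun j _ => ?_
  rw [← Complex.ofReal_mul, Complex.ofReal_re]
  ring


theorem stmt11 {ρ σ : Matrix d d ℂ} (hρ : ρ.PosDef) (hσ : σ.PosDef)
    (hρ1 : ρ.trace = 1) (hσ1 : σ.trace = 1) :
    ConvexOn ℝ (Set.Icc (0 : ℝ) 1) (phi hρ.1 hσ.1) := by
  have hne : Nonempty d := by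
    by_contra h
    rw [not_nonempty_iff] at h
    simp [Matrix.trace] at hρ1
  set U : Matrix d d ℂ := (hρ.1.eigenvectorUnitary : Matrix d d ℂ) with hU
  set V : Matrix d d ℂ := (hσ.1.eigenvectorUnitary : Matrix d d ℂ) with hV
  set a : d → ℝ := hρ.1.eigenvalues with ha
  set b : d → ℝ := hσ.1.eigenvalues with hb
  set P : Matrix d d ℂ := star U * V with hP
  set w : d × d → ℝ := fun p => Complex.normSq (P p.1 p.2) with hw
  set c : d × d → ℝ := fun p => Real.log (a p.1) with hc
  set t : d × d → ℝ := fun p => Real.log (b p.2) - Real.log (a p.1) with ht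
  have hphi : phi hρ.1 hσ.1 = fun s => Real.log (∑ p : d × d, w p * Real.exp (c p + s * t p)) := by
    funext s
    unfold phi
    rw [RTr_mpow_mul hρ hσ (1 - s) s]
    rw [show (∑ p : d × d, w p * Real.exp (c p + s * t p)) =
        ∑ i, ∑ j, w (i, j) * Real.exp (c (i, j) + s * t (i, j)) from Fintype.sum_prod_type (f := fun p => w p * Real.exp (c p + s * t p))]
    congr 1
    refine Finset.sum_congr rfl fun i _ => Finset.sum_congr rfl fun j _ => ?_
    simp only [hw, hc, ht, ha, hb]
    congr 1
    rw [Real.rpow_def_of_pos (hρ.eigenvalues_pos i), Real.rpow_def_of_pos (hσ.eigenvalues_pos j),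
      ← Real.exp_add, Real.exp_eq_exp]
    ring
  have hwnn : ∀ p, 0 ≤ w p := fun p => Complex.normSq_nonneg _
  have hPP : P * star P = 1 := by
    have hVV : V * star V = 1 := Matrix.mem_unitaryGroup_iff.mp (hσ.1.eigenvectorUnitary).2
    have hUU : star U * U = 1 := Matrix.mem_unitaryGroup_iff'.mp (hρ.1.eigenvectorUnitary).2
    rw [hP, StarMul.star_mul, star_star]
    calc star U * V * (star V * U) = star U * (V * star V) * U := by simp only [mul_assoc]
      _ = star U * U := by rw [hVV, mul_one]
      _ = 1 := hUU
  have hpos : ∃ p, 0 < w p := by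
    obtain ⟨i₀⟩ := hne
    have h1 : ∑ j, P i₀ j * star (P i₀ j) = 1 := by
      have := congr_arg (fun M : Matrix d d ℂ => M i₀ i₀) hPP
      simpa [Matrix.mul_apply, Matrix.star_apply, Matrix.one_apply_eq] using this
    have : ∃ j, P i₀ j ≠ 0 := by
      by_contra hcon
      push_neg at hcon
      simp [hcon] at h1
    obtain ⟨j, hj⟩ := this
    exact ⟨(i₀, j), Complex.normSq_pos.mpr hj⟩
  rw [hphi]
  exact (logsumexp_convexOn w c t hwnn hpos).subset (Set.subset_univ _) (convex_Icc 0 1)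
end

section
/- For any two positive semidefinite operators X, Y on a finite-dimensional Hilbert space, Tr[{X − Y ≥ 0} Y] + Tr[{X − Y < 0} X] ≤ Tr[X^{1/2} Y^{1/2}]. -/
open Matrix
open scoped ComplexOrder
set_option linter.unusedSectionVars false

variable {d : Type*} [Fintype d] [DecidableEq d]

lemma RTr_add (M N : Matrix d d ℂ) : RTr (M + N) = RTr M + RTr N := by
  simp [RTr, Matrix.trace_add]

lemma RTr_mul_comm (M N : Matrix d d ℂ) : RTr (M * N) = RTr (N * M) := by
  rw [RTr, Matrix.trace_mul_comm]; rfl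

lemma hcfc_congr {A : Matrix d d ℂ} (hA : A.IsHermitian) {f g : ℝ → ℝ}
    (h : ∀ x, f x = g x) : hA.cfc f = hA.cfc g := by
  have : (RCLike.ofReal ∘ f ∘ hA.eigenvalues : d → ℂ)
      = RCLike.ofReal ∘ g ∘ hA.eigenvalues := funext fun i => by simp [Function.comp, h _]
  simp only [Matrix.IsHermitian.cfc, this]

lemma hcfc_mul {A : Matrix d d ℂ} (hA : A.IsHermitian) (f g : ℝ → ℝ) :
    hA.cfc f * hA.cfc g = hA.cfc fun x => f x * g x := by
  simp only [Matrix.IsHermitian.cfc, Unitary.conjStarAlgAut_apply, Unitary.coe_star, mul_assoc]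
  rw [← mul_assoc (star (hA.eigenvectorUnitary : Matrix d d ℂ)),
    Unitary.coe_star_mul_self, one_mul, ← mul_assoc (Matrix.diagonal _),
    Matrix.diagonal_mul_diagonal]
  have : (Matrix.diagonal (fun i => (RCLike.ofReal ∘ f ∘ hA.eigenvalues) i *
      (RCLike.ofReal ∘ g ∘ hA.eigenvalues) i) : Matrix d d ℂ)
      = Matrix.diagonal (RCLike.ofReal ∘ (fun x => f x * g x) ∘ hA.eigenvalues) := by
    ext i j
    by_cases h : i = j <;> simp [Matrix.diagonal_apply, h, Function.comp]
  rw [this]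

lemma hcfc_id {A : Matrix d d ℂ} (hA : A.IsHermitian) : hA.cfc (fun x => x) = A := by
  conv_rhs => rw [hA.spectral_theorem]
  rfl

lemma hcfc_one {A : Matrix d d ℂ} (hA : A.IsHermitian) : hA.cfc (fun _ => 1) = 1 := by
  have : Matrix.diagonal (RCLike.ofReal ∘ (fun _ : ℝ => (1:ℝ)) ∘ hA.eigenvalues)
      = (1 : Matrix d d ℂ) := by
    ext i j
    by_cases h : i = j <;> simp [Matrix.diagonal_apply, h, Function.comp, Matrix.one_apply]
  rw [Matrix.IsHermitian.cfc, this, Unitary.conjStarAlgAut_apply, mul_one]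
  exact Unitary.coe_mul_star_self _

lemma hcfc_sub {A : Matrix d d ℂ} (hA : A.IsHermitian) (f g : ℝ → ℝ) :
    hA.cfc f - hA.cfc g = hA.cfc fun x => f x - g x := by
  simp only [Matrix.IsHermitian.cfc, Unitary.conjStarAlgAut_apply]
  rw [← sub_mul, ← mul_sub]
  have : (Matrix.diagonal (RCLike.ofReal ∘ f ∘ hA.eigenvalues)
      - Matrix.diagonal (RCLike.ofReal ∘ g ∘ hA.eigenvalues) : Matrix d d ℂ)
      = Matrix.diagonal (RCLike.ofReal ∘ (fun x => f x - g x) ∘ hA.eigenvalues) := by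
    ext i j
    by_cases h : i = j <;> simp [Matrix.diagonal_apply, h, Function.comp]
  rw [this]

lemma hcfc_add {A : Matrix d d ℂ} (hA : A.IsHermitian) (f g : ℝ → ℝ) :
    hA.cfc f + hA.cfc g = hA.cfc fun x => f x + g x := by
  simp only [Matrix.IsHermitian.cfc, Unitary.conjStarAlgAut_apply]
  rw [← add_mul, ← mul_add]
  have : (Matrix.diagonal (RCLike.ofReal ∘ f ∘ hA.eigenvalues)
      + Matrix.diagonal (RCLike.ofReal ∘ g ∘ hA.eigenvalues) : Matrix d d ℂ)
      = Matrix.diagonal (RCLike.ofReal ∘ (fun x => f x + g x) ∘ hA.eigenvalues) := by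
    ext i j
    by_cases h : i = j <;> simp [Matrix.diagonal_apply, h, Function.comp]
  rw [this]

lemma hcfc_posSemidef {A : Matrix d d ℂ} (hA : A.IsHermitian) {f : ℝ → ℝ}
    (hf : ∀ i, 0 ≤ f (hA.eigenvalues i)) : (hA.cfc f).PosSemidef := by
  have hd : (Matrix.diagonal (RCLike.ofReal ∘ f ∘ hA.eigenvalues) :
      Matrix d d ℂ).PosSemidef := by
    rw [Matrix.posSemidef_diagonal_iff]
    intro i
    simpa [Function.comp] using Complex.zero_le_real.mpr (hf i)
  simpa [Matrix.IsHermitian.cfc, Matrix.star_eq_conjTranspose] using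
    hd.mul_mul_conjTranspose_same (hA.eigenvectorUnitary : Matrix d d ℂ)

lemma psd_re_diag_nonneg {M : Matrix d d ℂ} (hM : M.PosSemidef) (i : d) :
    0 ≤ (M i i).re := by
  have h := hM.dotProduct_mulVec_nonneg (Pi.single i 1)
  have he : dotProduct (star (Pi.single i 1)) (M *ᵥ Pi.single i 1) = M i i := by
    simp [dotProduct, Matrix.mulVec, Pi.single_apply, Finset.sum_ite_eq,
      dotProduct_single]
  rw [he] at h
  exact (Complex.le_def.mp h).1

lemma trace_diagonal_mul (v : d → ℂ) (M : Matrix d d ℂ) :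
    Matrix.trace (Matrix.diagonal v * M) = ∑ i, v i * M i i := by
  simp [Matrix.trace, Matrix.diag, Matrix.mul_apply, Matrix.diagonal]

lemma rtr_hcfc_mul {A : Matrix d d ℂ} (hA : A.IsHermitian) (f : ℝ → ℝ) (B : Matrix d d ℂ) :
    RTr (hA.cfc f * B) = ∑ i, f (hA.eigenvalues i) *
      ((star (hA.eigenvectorUnitary : Matrix d d ℂ) * B *
        (hA.eigenvectorUnitary : Matrix d d ℂ)) i i).re := by
  set U : Matrix d d ℂ := (hA.eigenvectorUnitary : Matrix d d ℂ) with hU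
  have key : Matrix.trace (hA.cfc f * B)
      = Matrix.trace (Matrix.diagonal (RCLike.ofReal ∘ f ∘ hA.eigenvalues) * (star U * B * U)) := by
    simp only [Matrix.IsHermitian.cfc, Unitary.conjStarAlgAut_apply, Unitary.coe_star, mul_assoc, ← hU]
    rw [Matrix.trace_mul_comm]
    simp only [mul_assoc]
  rw [RTr, key, trace_diagonal_mul, Complex.re_sum]
  refine Finset.sum_congr rfl fun i _ => ?_
  simp [Function.comp, Complex.mul_re, mul_assoc]

lemma rtr_hcfc {A : Matrix d d ℂ} (hA : A.IsHermitian) (f : ℝ → ℝ) :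
    RTr (hA.cfc f) = ∑ i, f (hA.eigenvalues i) := by
  have := rtr_hcfc_mul hA f 1
  rw [mul_one] at this
  rw [this]
  refine Finset.sum_congr rfl fun i _ => ?_
  rw [mul_one, Unitary.coe_star_mul_self]
  simp

lemma RTr_sub (M N : Matrix d d ℂ) : RTr (M - N) = RTr M - RTr N := by
  simp [RTr, Matrix.trace_sub]

lemma hcfc_congr_eig {A : Matrix d d ℂ} (hA : A.IsHermitian) {f g : ℝ → ℝ}
    (h : ∀ i, f (hA.eigenvalues i) = g (hA.eigenvalues i)) : hA.cfc f = hA.cfc g := by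
  have : (RCLike.ofReal ∘ f ∘ hA.eigenvalues : d → ℂ)
      = RCLike.ofReal ∘ g ∘ hA.eigenvalues := funext fun i => by simp [Function.comp, h i]
  simp only [Matrix.IsHermitian.cfc, this]

lemma step3 {D S : Matrix d d ℂ} (hD : D.IsHermitian)
    (h1 : (S - D).PosSemidef) (h2 : (S + D).PosSemidef) :
    RTr (D * D) ≤ RTr ((hD.cfc fun x => |x|) * S) := by
  have hDD : D * D = hD.cfc fun x => x * x := by
    conv_lhs => rw [← hcfc_id hD]
    exact hcfc_mul hD _ _
  rw [hDD, rtr_hcfc, rtr_hcfc_mul]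
  refine Finset.sum_le_sum fun i _ => ?_
  have hDdiag : star (hD.eigenvectorUnitary : Matrix d d ℂ) * D *
      (hD.eigenvectorUnitary : Matrix d d ℂ)
      = Matrix.diagonal (RCLike.ofReal ∘ hD.eigenvalues) :=
    by simpa using hD.conjStarAlgAut_star_eigenvectorUnitary
  have hdr : ((star (hD.eigenvectorUnitary : Matrix d d ℂ) * D *
      (hD.eigenvectorUnitary : Matrix d d ℂ)) i i).re = hD.eigenvalues i := by
    rw [hDdiag]; simp [Matrix.diagonal_apply]
  have hsub : star (hD.eigenvectorUnitary : Matrix d d ℂ) * (S - D) *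
      (hD.eigenvectorUnitary : Matrix d d ℂ)
      = star (hD.eigenvectorUnitary : Matrix d d ℂ) * S * (hD.eigenvectorUnitary : Matrix d d ℂ)
      - star (hD.eigenvectorUnitary : Matrix d d ℂ) * D *
        (hD.eigenvectorUnitary : Matrix d d ℂ) := by noncomm_ring
  have hadd : star (hD.eigenvectorUnitary : Matrix d d ℂ) * (S + D) *
      (hD.eigenvectorUnitary : Matrix d d ℂ)
      = star (hD.eigenvectorUnitary : Matrix d d ℂ) * S * (hD.eigenvectorUnitary : Matrix d d ℂ)
      + star (hD.eigenvectorUnitary : Matrix d d ℂ) * D *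
        (hD.eigenvectorUnitary : Matrix d d ℂ) := by noncomm_ring
  have h1' : (0:ℝ) ≤ ((star (hD.eigenvectorUnitary : Matrix d d ℂ) * (S - D) *
      (hD.eigenvectorUnitary : Matrix d d ℂ)) i i).re := by
    rw [Matrix.star_eq_conjTranspose]
    exact psd_re_diag_nonneg (h1.conjTranspose_mul_mul_same _) i
  have h2' : (0:ℝ) ≤ ((star (hD.eigenvectorUnitary : Matrix d d ℂ) * (S + D) *
      (hD.eigenvectorUnitary : Matrix d d ℂ)) i i).re := by
    rw [Matrix.star_eq_conjTranspose]
    exact psd_re_diag_nonneg (h2.conjTranspose_mul_mul_same _) i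
  rw [hsub] at h1'
  rw [hadd] at h2'
  simp only [Matrix.sub_apply, Matrix.add_apply, Complex.sub_re, Complex.add_re, hdr] at h1' h2'
  have habs : |hD.eigenvalues i| ≤ ((star (hD.eigenvectorUnitary : Matrix d d ℂ) * S *
      (hD.eigenvectorUnitary : Matrix d d ℂ)) i i).re := abs_le.mpr ⟨by linarith, by linarith⟩
  calc hD.eigenvalues i * hD.eigenvalues i = |hD.eigenvalues i| * |hD.eigenvalues i| :=
        (abs_mul_abs_self _).symm
    _ ≤ _ := mul_le_mul_of_nonneg_left habs (abs_nonneg _)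

lemma step5 {C W : Matrix d d ℂ} (hC : C.IsHermitian)
    (h1 : ((1 : Matrix d d ℂ) - W).PosSemidef) (h2 : ((1 : Matrix d d ℂ) + W).PosSemidef) :
    RTr (W * C) ≤ RTr (hC.cfc fun x => |x|) := by
  rw [RTr_mul_comm]
  have hCW : C * W = hC.cfc (fun x => x) * W := by rw [hcfc_id]
  rw [hCW, rtr_hcfc_mul, rtr_hcfc]
  refine Finset.sum_le_sum fun i _ => ?_
  have hone : ((star (hC.eigenvectorUnitary : Matrix d d ℂ) * (1 : Matrix d d ℂ) *
      (hC.eigenvectorUnitary : Matrix d d ℂ)) i i).re = 1 := by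
    rw [mul_one, Unitary.coe_star_mul_self]
    simp [Matrix.one_apply]
  have hsub : star (hC.eigenvectorUnitary : Matrix d d ℂ) * ((1 : Matrix d d ℂ) - W) *
      (hC.eigenvectorUnitary : Matrix d d ℂ)
      = star (hC.eigenvectorUnitary : Matrix d d ℂ) * (1 : Matrix d d ℂ) *
        (hC.eigenvectorUnitary : Matrix d d ℂ)
      - star (hC.eigenvectorUnitary : Matrix d d ℂ) * W *
        (hC.eigenvectorUnitary : Matrix d d ℂ) := by noncomm_ring
  have hadd : star (hC.eigenvectorUnitary : Matrix d d ℂ) * ((1 : Matrix d d ℂ) + W) *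
      (hC.eigenvectorUnitary : Matrix d d ℂ)
      = star (hC.eigenvectorUnitary : Matrix d d ℂ) * (1 : Matrix d d ℂ) *
        (hC.eigenvectorUnitary : Matrix d d ℂ)
      + star (hC.eigenvectorUnitary : Matrix d d ℂ) * W *
        (hC.eigenvectorUnitary : Matrix d d ℂ) := by noncomm_ring
  have h1' : (0:ℝ) ≤ ((star (hC.eigenvectorUnitary : Matrix d d ℂ) * ((1 : Matrix d d ℂ) - W) *
      (hC.eigenvectorUnitary : Matrix d d ℂ)) i i).re := by
    rw [Matrix.star_eq_conjTranspose]
    exact psd_re_diag_nonneg (h1.conjTranspose_mul_mul_same _) i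
  have h2' : (0:ℝ) ≤ ((star (hC.eigenvectorUnitary : Matrix d d ℂ) * ((1 : Matrix d d ℂ) + W) *
      (hC.eigenvectorUnitary : Matrix d d ℂ)) i i).re := by
    rw [Matrix.star_eq_conjTranspose]
    exact psd_re_diag_nonneg (h2.conjTranspose_mul_mul_same _) i
  rw [hsub] at h1'
  rw [hadd] at h2'
  simp only [Matrix.sub_apply, Matrix.add_apply, Complex.sub_re, Complex.add_re, hone] at h1' h2'
  have habs : |((star (hC.eigenvectorUnitary : Matrix d d ℂ) * W *
      (hC.eigenvectorUnitary : Matrix d d ℂ)) i i).re| ≤ 1 := abs_le.mpr ⟨by linarith, by linarith⟩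
  calc hC.eigenvalues i * ((star (hC.eigenvectorUnitary : Matrix d d ℂ) * W *
        (hC.eigenvectorUnitary : Matrix d d ℂ)) i i).re
      ≤ |hC.eigenvalues i * ((star (hC.eigenvectorUnitary : Matrix d d ℂ) * W *
        (hC.eigenvectorUnitary : Matrix d d ℂ)) i i).re| := le_abs_self _
    _ = |hC.eigenvalues i| * |((star (hC.eigenvectorUnitary : Matrix d d ℂ) * W *
        (hC.eigenvectorUnitary : Matrix d d ℂ)) i i).re| := abs_mul _ _
    _ ≤ |hC.eigenvalues i| * 1 := mul_le_mul_of_nonneg_left habs (abs_nonneg _)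
    _ = |hC.eigenvalues i| := mul_one _


lemma mpow_half_sq {X : Matrix d d ℂ} (hX : X.PosSemidef) :
    mpow hX.1 (1/2) * mpow hX.1 (1/2) = X := by
  have h1 : mpow hX.1 (1/2) * mpow hX.1 (1/2)
      = hX.1.cfc fun x => (if x = 0 then 0 else x ^ (1/2:ℝ)) *
          (if x = 0 then 0 else x ^ (1/2:ℝ)) := hcfc_mul hX.1 _ _
  rw [h1]
  have h2 : hX.1.cfc (fun x => (if x = 0 then 0 else x ^ (1/2:ℝ)) *
      (if x = 0 then 0 else x ^ (1/2:ℝ))) = hX.1.cfc fun x => x := by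
    refine hcfc_congr_eig hX.1 fun i => ?_
    by_cases h : hX.1.eigenvalues i = 0
    · simp [h]
    · have hpos : 0 < hX.1.eigenvalues i := lt_of_le_of_ne (hX.eigenvalues_nonneg i) (Ne.symm h)
      rw [if_neg h, ← Real.rpow_add hpos]
      norm_num
  rw [h2, hcfc_id]

lemma mpow_half_psd {X : Matrix d d ℂ} (hX : X.PosSemidef) :
    (mpow hX.1 (1/2)).PosSemidef := by
  refine hcfc_posSemidef hX.1 fun i => ?_
  by_cases h : hX.1.eigenvalues i = 0
  · simp [h]
  · rw [if_neg h]
    exact Real.rpow_nonneg (hX.eigenvalues_nonneg i) _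

theorem stmt14 {X Y : Matrix d d ℂ} (hX : X.PosSemidef) (hY : Y.PosSemidef) :
    RTr (projNonneg (hX.1.sub hY.1) * Y) + RTr (projNeg (hX.1.sub hY.1) * X)
      ≤ RTr (mpow hX.1 (1 / 2) * mpow hY.1 (1 / 2)) := by
  set hC : (X - Y).IsHermitian := hX.1.sub hY.1 with hCdef
  set A : Matrix d d ℂ := mpow hX.1 (1/2) with hAdef
  set B : Matrix d d ℂ := mpow hY.1 (1/2) with hBdef
  have hAh : A.IsHermitian := mpow_isHermitian hX.1 _
  have hBh : B.IsHermitian := mpow_isHermitian hY.1 _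
  have hApsd : A.PosSemidef := mpow_half_psd hX
  have hBpsd : B.PosSemidef := mpow_half_psd hY
  have hAA : A * A = X := mpow_half_sq hX
  have hBB : B * B = Y := mpow_half_sq hY
  have hD : (A - B).IsHermitian := hAh.sub hBh
  -- the sign matrix of A - B
  set W : Matrix d d ℂ := hD.cfc (fun x => if x = 0 then 0 else if 0 ≤ x then 1 else -1)
    with hWdef
  have h1W : ((1 : Matrix d d ℂ) - W).PosSemidef := by
    have e : (1 : Matrix d d ℂ) - W
        = hD.cfc fun x => 1 - (if x = 0 then 0 else if 0 ≤ x then 1 else -1) := by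
      rw [hWdef, ← hcfc_one hD, hcfc_sub]
    rw [e]
    refine hcfc_posSemidef hD fun i => ?_
    split_ifs <;> norm_num
  have h2W : ((1 : Matrix d d ℂ) + W).PosSemidef := by
    have e : (1 : Matrix d d ℂ) + W
        = hD.cfc fun x => 1 + (if x = 0 then 0 else if 0 ≤ x then 1 else -1) := by
      rw [hWdef, ← hcfc_one hD, hcfc_add]
    rw [e]
    refine hcfc_posSemidef hD fun i => ?_
    split_ifs <;> norm_num
  have hWD : W * (A - B) = hD.cfc fun x => |x| := by
    have e0 : W * (A - B) = W * hD.cfc (fun x => x) :=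
      congrArg (fun Z => W * Z) (hcfc_id hD).symm
    rw [e0, hWdef, hcfc_mul]
    refine hcfc_congr hD fun x => ?_
    rcases lt_trichotomy x 0 with h | h | h
    · rw [if_neg (by linarith), if_neg (not_le.mpr h), abs_of_neg h]; ring
    · simp [h]
    · rw [if_neg (by linarith), if_pos h.le, abs_of_pos h]; ring
  have hDW : (A - B) * W = hD.cfc fun x => |x| := by
    have e0 : (A - B) * W = hD.cfc (fun x => x) * W :=
      congrArg (fun Z => Z * W) (hcfc_id hD).symm
    rw [e0, hWdef, hcfc_mul]
    refine hcfc_congr hD fun x => ?_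
    rcases lt_trichotomy x 0 with h | h | h
    · rw [if_neg (by linarith), if_neg (not_le.mpr h), abs_of_neg h]; ring
    · simp [h]
    · rw [if_neg (by linarith), if_pos h.le, abs_of_pos h]; ring
  -- step 3
  have hs3 : RTr ((A - B) * (A - B)) ≤ RTr ((hD.cfc fun x => |x|) * (A + B)) := by
    refine step3 hD ?_ ?_
    · have e : A + B - (A - B) = B + B := by abel
      rw [e]; exact hBpsd.add hBpsd
    · have e : A + B + (A - B) = A + A := by abel
      rw [e]; exact hApsd.add hApsd
  -- step 4
  have hs4 : RTr ((hD.cfc fun x => |x|) * (A + B)) = RTr (W * (X - Y)) := by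
    have hm : W * (X - Y) + W * (X - Y) = W * ((A - B) * (A + B)) + W * ((A + B) * (A - B)) := by
      rw [← hAA, ← hBB]; noncomm_ring
    have t1 : RTr (W * ((A - B) * (A + B))) = RTr ((hD.cfc fun x => |x|) * (A + B)) := by
      rw [← mul_assoc, hWD]
    have t2 : RTr (W * ((A + B) * (A - B))) = RTr ((hD.cfc fun x => |x|) * (A + B)) := by
      rw [← mul_assoc, RTr_mul_comm, ← mul_assoc, hDW]
    have e4 := congrArg RTr hm
    rw [RTr_add, RTr_add, t1, t2] at e4
    linarith
  -- step 5
  have hs5 : RTr (W * (X - Y)) ≤ RTr (hC.cfc fun x => |x|) := step5 hC h1W h2W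
  -- LHS identity
  have hsum : projNonneg hC + projNeg hC = 1 := by
    have e : projNonneg hC + projNeg hC
        = hC.cfc fun x => (if 0 ≤ x then 1 else 0) + (if x < 0 then 1 else 0) :=
      hcfc_add hC _ _
    rw [e, ← hcfc_one hC]
    refine hcfc_congr hC fun x => ?_
    by_cases h : 0 ≤ x
    · simp [h, not_lt.mpr h]
    · simp [h, not_le.mp h]
  have hdiff : projNonneg hC - projNeg hC = hC.cfc fun x => if 0 ≤ x then 1 else -1 := by
    have e : projNonneg hC - projNeg hC
        = hC.cfc fun x => (if 0 ≤ x then 1 else 0) - (if x < 0 then 1 else 0) :=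
      hcfc_sub hC _ _
    rw [e]
    refine hcfc_congr hC fun x => ?_
    by_cases h : 0 ≤ x
    · simp [h, not_lt.mpr h]
    · simp [h, not_le.mp h]
  have habs : (hC.cfc fun x => if 0 ≤ x then 1 else -1) * (X - Y) = hC.cfc fun x => |x| := by
    have e0 : (hC.cfc fun x => if 0 ≤ x then 1 else -1) * (X - Y)
        = (hC.cfc fun x => if 0 ≤ x then 1 else -1) * hC.cfc (fun x => x) :=
      congrArg (fun Z => (hC.cfc fun x => if 0 ≤ x then 1 else -1) * Z) (hcfc_id hC).symm
    rw [e0, hcfc_mul]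
    refine hcfc_congr hC fun x => ?_
    by_cases h : 0 ≤ x
    · rw [if_pos h, abs_of_nonneg h]; ring
    · rw [if_neg h, abs_of_neg (not_le.mp h)]; ring
  have hm2 : projNonneg hC * Y + projNeg hC * X + (projNonneg hC * Y + projNeg hC * X)
      = (projNonneg hC + projNeg hC) * (X + Y)
        - (projNonneg hC - projNeg hC) * (X - Y) := by noncomm_ring
  have e4 := congrArg RTr hm2
  rw [hsum, hdiff, habs, one_mul, RTr_add, RTr_add, RTr_sub, RTr_add] at e4
  -- trace of (A-B)^2
  have hfin : (A - B) * (A - B) + (A * B + B * A) = X + Y := by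
    rw [← hAA, ← hBB]; noncomm_ring
  have e5 := congrArg RTr hfin
  rw [RTr_add, RTr_add] at e5
  have e6 : RTr (B * A) = RTr (A * B) := RTr_mul_comm _ _
  rw [RTr_add] at e5
  linarith
end
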